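/- The function x(t) = 2/(t+1) on (-1, 0] satisfies the ODE x''(t) = -x(t)·x'(t), and it is backward inextensible and backward incomplete (x(t) → +∞ as t → -1⁺). -/

import Mathlib

open Set Filter

/-- The function `x(t) = 2/(t+1)` on `(-1, 0]` satisfies `x'' = -x·x'` (with
`x' (t) = -2/(t+1)²`), and it is backward inextensible and backward incomplete:
`x(t) → +∞` as `t → -1⁺`. -/
theorem backward_incomplete_friction :
    (∀ t ∈ Set.Ioc (-1 : ℝ) 0,
      HasDerivAt (fun s : ℝ => 2 / (s + 1)) (-2 / (t + 1) ^ 2) t ∧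
      HasDerivAt (fun s : ℝ => -2 / (s + 1) ^ 2)
        (-(2 / (t + 1)) * (-2 / (t + 1) ^ 2)) t) ∧
    Filter.Tendsto (fun t : ℝ => 2 / (t + 1))
      (nhdsWithin (-1) (Set.Ioi (-1))) Filter.atTop := by
  constructor
  · intro t ht
    have hne : t + 1 ≠ 0 := by nlinarith [ht.1]
    have h1 : HasDerivAt (fun s : ℝ => s + 1) 1 t :=
      (hasDerivAt_id t).add_const 1
    constructor
    · have : HasDerivAt (fun s : ℝ => 2 / (s + 1)) ((0 * (t + 1) - 2 * 1) / (t + 1) ^ 2) t :=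
        (hasDerivAt_const t (2 : ℝ)).fun_div h1 hne
      convert this using 1
      ring
    · have h2 : HasDerivAt (fun s : ℝ => (s + 1) ^ 2) (2 * (t + 1)) t := by
        simpa using h1.fun_pow 2
      have hne2 : (t + 1) ^ 2 ≠ 0 := pow_ne_zero _ hne
      have : HasDerivAt (fun s : ℝ => -2 / (s + 1) ^ 2)
          ((0 * (t + 1) ^ 2 - -2 * (2 * (t + 1))) / ((t + 1) ^ 2) ^ 2) t :=
        (hasDerivAt_const t (-2 : ℝ)).fun_div h2 hne2
      convert this using 1
      field_simp
      ring
  · have h : Tendsto (fun t : ℝ => t + 1) (nhdsWithin (-1) (Set.Ioi (-1)))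
        (nhdsWithin 0 (Set.Ioi 0)) := by
      apply tendsto_nhdsWithin_of_tendsto_nhds_of_eventually_within
      · have : Tendsto (fun t : ℝ => t + 1) (nhds (-1)) (nhds 0) := by
          have h0 : Tendsto (fun t : ℝ => t + 1) (nhds (-1)) (nhds ((-1 : ℝ) + 1)) :=
            (continuous_add_right (1 : ℝ)).tendsto (-1)
          norm_num at h0
          exact h0
        exact this.mono_left nhdsWithin_le_nhds
      · filter_upwards [self_mem_nhdsWithin] with x hx
        simpa using by linarith [mem_Ioi.mp hx]
    have hinv : Tendsto (fun t : ℝ => (t + 1)⁻¹)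
        (nhdsWithin (-1) (Set.Ioi (-1))) atTop :=
      tendsto_inv_nhdsGT_zero.comp h
    have := hinv.const_mul_atTop (by norm_num : (0:ℝ) < 2)
    simpa [div_eq_mul_inv] using this
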